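/- Let F/K be an algebraic function field of one variable over a field K of characteristic zero, with an injective endomorphism τ₀ of F, and suppose there is a place P of F/K with v_P(τ₀ⁱ r) > 0 for all i ≥ 0, where 0 ≠ r ∈ F. Suppose further that for every i ≥ 1 the equation Eq(A, i) (with A = ((1, r); (1, 0))) has no solution algebraic over F. Let Y be transcendental over F with τ extending τ₀ by τ(Y) = 1 + r/Y. If N ∈ F[Y] is a nonzero polynomial of degree ν with Y^λ exactly dividing N, and N = α·Y^λ·Y^ν·τ(N) for some α ∈ F^×, where τ(N) denotes the rational function obtained by applying τ to coefficients and substituting Y ↦ 1 + r/Y, then N ∈ F^×. -/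

import Mathlib

universe u

/-- `MoebiusEq f M g` means `f * (M₂₁ g + M₂₂) = M₁₁ g + M₁₂`, i.e. `Eq(f; M; g)`. -/
def MoebiusEq {U : Type*} [Field U] (f : U) (M : Matrix (Fin 2) (Fin 2) U) (g : U) : Prop :=
  f * (M 1 0 * g + M 1 1) = M 0 0 * g + M 0 1

/-- The τ-twisted cocycle `A_i = (τ^{i-1}A)⋯(τA)A`. -/
def cocycle {L : Type*} [Field L] (τ : L →+* L) (A : Matrix (Fin 2) (Fin 2) L) :
    ℕ → Matrix (Fin 2) (Fin 2) L
  | 0 => 1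
  | n + 1 => A.map ((⇑τ)^[n]) * cocycle τ A n

lemma MoebiusEq.comp {U : Type*} [Field U] {f g h : U} {M M' : Matrix (Fin 2) (Fin 2) U}
    (h1 : MoebiusEq f M g) (h2 : MoebiusEq g M' h) : MoebiusEq f (M * M') h := by
  unfold MoebiusEq at *
  simp only [Matrix.mul_apply, Fin.sum_univ_two]
  linear_combination (M 0 0 - f * M 1 0) * h2 + (M' 1 0 * h + M' 1 1) * h1

lemma MoebiusEq.map {U V : Type*} [Field U] [Field V] (φ : U →+* V)
    {f g : U} {M : Matrix (Fin 2) (Fin 2) U} (h : MoebiusEq f M g) :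
    MoebiusEq (φ f) (M.map φ) (φ g) := by
  unfold MoebiusEq at *
  simpa [Matrix.map_apply, map_mul, map_add] using congrArg φ h

lemma cocycle_succ' {L : Type*} [Field L] (τ : L →+* L) (A : Matrix (Fin 2) (Fin 2) L) (n : ℕ) :
    cocycle τ A (n + 1) = (cocycle τ A n).map τ * A := by
  induction n with
  | zero =>
      show A.map ((⇑τ)^[0]) * cocycle τ A 0 = _
      simp [cocycle, Matrix.map_one]
  | succ n ih =>
      calc cocycle τ A (n + 2) = A.map ((⇑τ)^[n+1]) * cocycle τ A (n+1) := rfl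
        _ = A.map ((⇑τ)^[n+1]) * ((cocycle τ A n).map ⇑τ * A) := by rw [ih]
        _ = (A.map ((⇑τ)^[n]) * cocycle τ A n).map ⇑τ * A := by
              rw [Matrix.map_mul (f := τ), Function.iterate_succ', ← Matrix.map_map, mul_assoc]
        _ = (cocycle τ A (n+1)).map ⇑τ * A := rfl

/-- extension of an endomorphism of `F` to the algebraic closure. -/
noncomputable def mySigmaPkg (F : Type u) [Field F] (τ₀ : F →+* F) :
    { σ : AlgebraicClosure F →+* AlgebraicClosure F //
      ∀ x : F, σ (algebraMap F (AlgebraicClosure F) x)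
        = algebraMap F (AlgebraicClosure F) (τ₀ x) } :=
  let can : Algebra F (AlgebraicClosure F) := AlgebraicClosure.instAlgebra F
  let tw : Algebra F (AlgebraicClosure F) :=
    ((algebraMap F (AlgebraicClosure F)).comp τ₀).toAlgebra
  let σA := @IsAlgClosed.lift (AlgebraicClosure F) _ _ F _ _ (AlgebraicClosure F) _ _
    can tw
    (by letI := can; infer_instance)
    (by letI := tw; infer_instance)
    (AlgebraicClosure.isAlgebraic F)
  ⟨@AlgHom.toRingHom F _ _ _ _ _ can tw σA, fun x => by
    have h := @AlgHom.commutes F _ _ _ _ _ can tw σA x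
    exact h⟩

lemma val_sub_one_aux {F : Type*} [Field F] (v : AddValuation F (WithTop ℤ)) {x : F}
    (hx : 0 < v x) : v (x - 1) = 0 ∧ x - 1 ≠ 0 := by
  have h1 : v (1 : F) = 0 := v.map_one
  have hge : (0 : WithTop ℤ) ≤ v (x - 1) := by
    have h := v.map_sub x 1
    rw [h1, min_eq_right (le_of_lt hx)] at h
    exact h
  have hle : v (x - 1) ≤ 0 := by
    by_contra hcon
    push_neg at hcon
    have h := v.map_sub x (x - 1)
    rw [sub_sub_cancel, h1] at h
    have : (0 : WithTop ℤ) < v x ⊓ v (x - 1) := lt_min hx hcon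
    exact absurd (lt_of_lt_of_le this h) (lt_irrefl 0)
  have heq : v (x - 1) = 0 := le_antisymm hle hge
  refine ⟨heq, fun hz => ?_⟩
  rw [hz, AddValuation.map_zero] at heq
  simp at heq

theorem stmt8 {K : Type*} {F : Type u} [Field K] [CharZero K] [Field F] [Algebra K F]
    -- `F/K` is an algebraic function field of one variable
    (hFK : ∃ x : F, Transcendental K x ∧
      Algebra.IsAlgebraic (IntermediateField.adjoin K ({x} : Set F)) F)
    (τ₀ : F →+* F) (hτ₀ : Function.Injective τ₀)
    (r : F) (hr : r ≠ 0)
    -- a place `P` of `F/K` with `v_P(τ₀ⁱ r) > 0` for all `i ≥ 0`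
    (v : AddValuation F (WithTop ℤ))
    (hvK : ∀ a : K, a ≠ 0 → v (algebraMap K F a) = 0)
    (hvnorm : ∃ z : F, z ≠ 0 ∧ v z = 1)
    (hvr : ∀ i : ℕ, 0 < v ((⇑τ₀)^[i] r))
    -- for every `i ≥ 1`, `Eq(A, i)` has no solution algebraic over `F`
    (hnoalg : ∀ (U : Type u) [Field U] [Algebra F U] (σ : U →+* U),
      (∀ x : F, σ (algebraMap F U x) = algebraMap F U (τ₀ x)) →
      ∀ u : U, IsAlgebraic F u → ∀ i : ℕ, 1 ≤ i →
        ¬ MoebiusEq ((⇑σ)^[i] u)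
            ((cocycle τ₀ !![1, r; 1, 0] i).map (algebraMap F U)) u)
    -- `τ` extends `τ₀` to `F(Y)` with `τ(Y) = 1 + r/Y`
    (τ : RatFunc F →+* RatFunc F)
    (hτF : ∀ x : F, τ (algebraMap F (RatFunc F) x) = algebraMap F (RatFunc F) (τ₀ x))
    (hτY : τ RatFunc.X = 1 + algebraMap F (RatFunc F) r / RatFunc.X)
    (N : Polynomial F) (hN : N ≠ 0) (lam : ℕ)
    (hdvd : Polynomial.X ^ lam ∣ N) (hndvd : ¬ Polynomial.X ^ (lam + 1) ∣ N)
    (α : F) (hα : α ≠ 0)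
    (heq : algebraMap (Polynomial F) (RatFunc F) N =
      algebraMap F (RatFunc F) α * RatFunc.X ^ lam * RatFunc.X ^ N.natDegree *
        τ (algebraMap (Polynomial F) (RatFunc F) N)) :
    ∃ c : F, c ≠ 0 ∧ N = Polynomial.C c := by
  classical
  set ν := N.natDegree with hν
  set M₀ : Polynomial F :=
    N.sum fun j a => Polynomial.C (τ₀ a) * (Polynomial.X + Polynomial.C r) ^ j
      * Polynomial.X ^ (ν - j) with hM₀
  have hX0 : (RatFunc.X : RatFunc F) ≠ 0 := RatFunc.X_ne_zero
  have hsupp : ∀ j ∈ N.support, j ≤ ν := fun j hj => Polynomial.le_natDegree_of_mem_supp j hj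
  -- Step 1 : the polynomial identity `N = C α * X ^ lam * M₀`
  have hτN : τ (algebraMap (Polynomial F) (RatFunc F) N) = ∑ j ∈ N.support,
      algebraMap F (RatFunc F) (τ₀ (N.coeff j))
        * (1 + algebraMap F (RatFunc F) r / RatFunc.X) ^ j := by
    conv_lhs => rw [← Polynomial.sum_C_mul_X_pow_eq N, Polynomial.sum_def]
    rw [map_sum, map_sum]
    refine Finset.sum_congr rfl fun j hj => ?_
    simp only [map_mul, map_pow, RatFunc.algebraMap_C, ← RatFunc.algebraMap_eq_C,
      RatFunc.algebraMap_X, hτF, hτY]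
  have hM₀φ : algebraMap (Polynomial F) (RatFunc F) M₀ = ∑ j ∈ N.support,
      algebraMap F (RatFunc F) (τ₀ (N.coeff j))
        * (RatFunc.X + algebraMap F (RatFunc F) r) ^ j * RatFunc.X ^ (ν - j) := by
    rw [hM₀, Polynomial.sum_def, map_sum]
    refine Finset.sum_congr rfl fun j hj => ?_
    simp only [map_mul, map_pow, map_add, RatFunc.algebraMap_C, ← RatFunc.algebraMap_eq_C,
      RatFunc.algebraMap_X]
  have hkey0 : RatFunc.X ^ ν * τ (algebraMap (Polynomial F) (RatFunc F) N)
      = algebraMap (Polynomial F) (RatFunc F) M₀ := by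
    rw [hτN, hM₀φ, Finset.mul_sum]
    refine Finset.sum_congr rfl fun j hj => ?_
    have hj' := hsupp j hj
    have h1 : (1 : RatFunc F) + algebraMap F (RatFunc F) r / RatFunc.X
        = (RatFunc.X + algebraMap F (RatFunc F) r) / RatFunc.X := by
      field_simp
    have hsplit : (RatFunc.X : RatFunc F) ^ ν = RatFunc.X ^ (ν - j) * RatFunc.X ^ j := by
      rw [← pow_add, Nat.sub_add_cancel hj']
    rw [h1, div_pow, hsplit]
    have hXj : (RatFunc.X : RatFunc F) ^ j ≠ 0 := pow_ne_zero _ hX0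
    field_simp
  have key : N = Polynomial.C α * Polynomial.X ^ lam * M₀ := by
    apply IsFractionRing.injective (Polynomial F) (RatFunc F)
    rw [heq]
    rw [map_mul, map_mul, map_pow, RatFunc.algebraMap_C, ← RatFunc.algebraMap_eq_C,
      RatFunc.algebraMap_X, ← hkey0]
    ring
  -- move to the algebraic closure
  obtain ⟨σ, hσ⟩ := mySigmaPkg F τ₀
  set ι := algebraMap F (AlgebraicClosure F) with hι
  have hιinj : Function.Injective ι := RingHom.injective ι
  set Nb := N.map ι with hNbdef
  set Mb := M₀.map ι with hMbdef
  have hNb0 : Nb ≠ 0 := Polynomial.map_ne_zero hN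
  have hNb : Nb = Polynomial.C (ι α) * Polynomial.X ^ lam * Mb := by
    rw [hNbdef, key]
    simp [Polynomial.map_mul, Polynomial.map_pow]
    exact Or.inl rfl
  have hMbeval : ∀ x : AlgebraicClosure F, Mb.eval x
      = ∑ j ∈ N.support, σ (ι (N.coeff j)) * (x + ι r) ^ j * x ^ (ν - j) := by
    intro x
    rw [hMbdef, hM₀, Polynomial.sum_def, Polynomial.map_sum, Polynomial.eval_finset_sum]
    refine Finset.sum_congr rfl fun j hj => ?_
    simp [hσ]
  set P := Nb.map σ with hPdef
  have hP0 : P ≠ 0 := Polynomial.map_ne_zero hNb0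
  have hPeval : ∀ t : AlgebraicClosure F, P.eval t
      = ∑ j ∈ N.support, σ (ι (N.coeff j)) * t ^ j := by
    intro t
    rw [hPdef, hNbdef, Polynomial.map_map, Polynomial.eval_map, Polynomial.eval₂_eq_sum,
      Polynomial.sum_def]
    refine Finset.sum_congr rfl fun j hj => ?_
    simp
  have hMb_eq : ∀ x : AlgebraicClosure F, x ≠ 0 →
      Mb.eval x = x ^ ν * P.eval ((x + ι r) / x) := by
    intro x hx
    rw [hMbeval, hPeval, Finset.mul_sum]
    refine Finset.sum_congr rfl fun j hj => ?_
    have hj' := hsupp j hj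
    have hsplit : x ^ ν = x ^ (ν - j) * x ^ j := by
      rw [← pow_add, Nat.sub_add_cancel hj']
    rw [div_pow, hsplit]
    have hXj : x ^ j ≠ 0 := pow_ne_zero _ hx
    field_simp
  have hroot_to : ∀ w : AlgebraicClosure F, Nb.eval w = 0 → P.eval (σ w) = 0 := by
    intro w hw
    rw [hPdef, Polynomial.eval_map, Polynomial.eval₂_at_apply, hw, map_zero]
  have hroot_of : ∀ t : AlgebraicClosure F, P.eval t = 0 →
      ∃ w, Nb.eval w = 0 ∧ σ w = t := by
    intro t ht
    have hmem : t ∈ P.roots := by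
      rw [Polynomial.mem_roots hP0]
      exact ht
    rw [hPdef, (IsAlgClosed.splits Nb).roots_map_of_injective (RingHom.injective σ)] at hmem
    obtain ⟨w, hw, hwt⟩ := Multiset.mem_map.mp hmem
    exact ⟨w, (Polynomial.mem_roots hNb0).mp hw, hwt⟩
  have hMb0ne : Mb.eval 0 ≠ 0 := by
    rw [hMbeval 0]
    rw [Finset.sum_eq_single ν]
    · simp only [zero_add, Nat.sub_self, pow_zero, mul_one]
      refine mul_ne_zero ?_ (pow_ne_zero _ ?_)
      · have : N.coeff ν ≠ 0 := by
          rw [hν]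
          exact Polynomial.leadingCoeff_ne_zero.mpr hN
        simpa using fun h => this (hιinj (by simpa using h))
      · simpa using hr
    · intro j hj hjne
      have : ν - j ≠ 0 := Nat.sub_ne_zero_of_lt (lt_of_le_of_ne (hsupp j hj) hjne)
      rw [zero_pow this, mul_zero]
    · intro h
      exact absurd (Polynomial.natDegree_mem_support_of_nonzero hN) h
  have hσinj : Function.Injective σ := RingHom.injective σ
  have hchar : ∀ x : AlgebraicClosure F, Mb.eval x = 0 ↔
      ∃ w, Nb.eval w = 0 ∧ w ≠ 1 ∧ x = ι r / (σ w - 1) := by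
    intro x
    constructor
    · intro hx
      by_cases hx0 : x = 0
      · rw [hx0] at hx; exact absurd hx hMb0ne
      · rw [hMb_eq x hx0] at hx
        have hPt : P.eval ((x + ι r) / x) = 0 := by
          rcases mul_eq_zero.mp hx with h | h
          · exact absurd h (pow_ne_zero _ hx0)
          · exact h
        obtain ⟨w, hw, hwt⟩ := hroot_of _ hPt
        have hιr : ι r ≠ 0 := by simpa using hr
        have hsub : σ w - 1 = ι r / x := by
          rw [hwt]
          field_simp
          ring
        have hsubne : σ w - 1 ≠ 0 := by
          rw [hsub]
          exact div_ne_zero hιr hx0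
        refine ⟨w, hw, ?_, ?_⟩
        · intro hw1
          rw [hw1, map_one] at hsubne
          simp at hsubne
        · rw [hsub]
          field_simp
    · rintro ⟨w, hw, hw1, rfl⟩
      have hιr : ι r ≠ 0 := by simpa using hr
      have hsubne : σ w - 1 ≠ 0 := by
        intro h
        exact hw1 (hσinj (by rw [map_one]; exact sub_eq_zero.mp h))
      have hxne : ι r / (σ w - 1) ≠ 0 := div_ne_zero hιr hsubne
      rw [hMb_eq _ hxne]
      have harg : (ι r / (σ w - 1) + ι r) / (ι r / (σ w - 1)) = σ w := by
        field_simp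
        ring
      rw [harg, hroot_to w hw, mul_zero]
  -- Case `lam ≠ 0` is impossible: it produces an infinite chain of roots
  have hlam0 : lam = 0 := by
    by_contra hlam
    let y : ℕ → F := fun k => Nat.rec (0 : F) (fun _ yk => r / (τ₀ yk - 1)) k
    have hy0 : y 0 = 0 := rfl
    have hysucc : ∀ k, y (k + 1) = r / (τ₀ (y k) - 1) := fun k => rfl
    have hv1 : ∀ k i, 0 < v ((⇑τ₀)^[i] (y (k + 1))) := by
      intro k
      induction k with
      | zero =>
          intro i
          have hy1 : y (0+1) = -r := by
            rw [hysucc 0, hy0, map_zero, zero_sub, div_neg, div_one]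
          rw [hy1]
          have hneg : (⇑τ₀)^[i] (-r) = -((⇑τ₀)^[i] r) := by
            rw [← RingHom.coe_pow]
            exact map_neg (τ₀ ^ i) r
          rw [hneg, AddValuation.map_neg]
          exact hvr i
      | succ k ih =>
          intro i
          have hBv : v ((⇑τ₀)^[i+1] (y (k+1)) - 1) = 0 := (val_sub_one_aux v (ih (i+1))).1
          have hBne : (⇑τ₀)^[i+1] (y (k+1)) - 1 ≠ 0 := (val_sub_one_aux v (ih (i+1))).2
          have hmap : (⇑τ₀)^[i] (y (k + 2))
              = (⇑τ₀)^[i] r / ((⇑τ₀)^[i+1] (y (k+1)) - 1) := by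
            rw [hysucc (k+1), ← RingHom.coe_pow, map_div₀, map_sub, map_one, RingHom.coe_pow,
              Function.iterate_succ_apply]
          have h2 : v ((⇑τ₀)^[i] r)
              = v ((⇑τ₀)^[i] r / ((⇑τ₀)^[i+1] (y (k+1)) - 1))
                + v ((⇑τ₀)^[i+1] (y (k+1)) - 1) := by
            conv_lhs => rw [← div_mul_cancel₀ ((⇑τ₀)^[i] r) hBne]
            exact v.map_mul _ _
          rw [hmap]
          have h3 : v ((⇑τ₀)^[i] r / ((⇑τ₀)^[i+1] (y (k+1)) - 1)) = v ((⇑τ₀)^[i] r) := by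
            rw [h2, hBv, add_zero]
          rw [h3]
          exact hvr i
    have hden : ∀ k, τ₀ (y k) - 1 ≠ 0 := by
      intro k
      cases k with
      | zero =>
          rw [hy0, map_zero, zero_sub]
          simpa using (neg_ne_zero.mpr (one_ne_zero (α := F)))
      | succ k =>
          have h := val_sub_one_aux v (by simpa using hv1 k 1)
          exact h.2
    have hyne1 : ∀ k, y k ≠ 1 := by
      intro k
      cases k with
      | zero => rw [hy0]; exact zero_ne_one
      | succ k =>
          intro h
          have h0 := hv1 k 0
          rw [Function.iterate_zero_apply, h, v.map_one] at h0
          exact lt_irrefl _ h0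
    have hyne0 : ∀ k, y (k + 1) ≠ 0 := by
      intro k
      rw [hysucc k]
      exact div_ne_zero hr (hden k)
    have hroot0 : Nb.eval 0 = 0 := by
      rw [hNb]
      simp [zero_pow hlam]
    have hchain : ∀ k, Nb.eval (ι (y k)) = 0 := by
      intro k
      induction k with
      | zero => rw [hy0, map_zero]; exact hroot0
      | succ k ih =>
          have hw1 : ι (y k) ≠ 1 := by
            intro h
            exact hyne1 k (hιinj (by rw [map_one]; exact h))
          have hx : Mb.eval (ι r / (σ (ι (y k)) - 1)) = 0 :=
            (hchar _).mpr ⟨ι (y k), ih, hw1, rfl⟩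
          have hxval : ι r / (σ (ι (y k)) - 1) = ι (y (k+1)) := by
            rw [hσ, hysucc, map_div₀, map_sub, map_one]
          rw [← hxval, hNb]
          simp [hx]
    have hstep : ∀ a b, y (a + 1) = y (b + 1) → y a = y b := by
      intro a b h
      rw [hysucc a, hysucc b] at h
      have h2 := (div_eq_div_iff (hden a) (hden b)).mp h
      have h3 : r * (τ₀ (y b) - 1) = r * (τ₀ (y a) - 1) := by
        linear_combination h2
      have h4 := mul_left_cancel₀ hr h3
      exact (hτ₀ (sub_left_inj.mp h4)).symm
    have hyinj : ∀ a b, y a = y b → a = b := by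
      intro a
      induction a with
      | zero =>
          intro b h
          cases b with
          | zero => rfl
          | succ b => exact absurd (h.symm.trans hy0) (hyne0 b)
      | succ a ih =>
          intro b h
          cases b with
          | zero => exact absurd (h.trans hy0) (hyne0 a)
          | succ b => rw [ih b (hstep a b h)]
    have hinf : {x : AlgebraicClosure F | Nb.IsRoot x}.Infinite := by
      apply Set.infinite_of_injective_forall_mem (f := fun k : ℕ => ι (y (k + 1)))
      · intro a b h
        exact Nat.succ_injective (hyinj _ _ (hιinj h))
      · intro k
        exact hchain (k+1)
    exact hinf (Polynomial.finite_setOf_isRoot hNb0)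
  -- now `lam = 0`; show `Nb` has no roots at all
  subst hlam0
  have hια : ι α ≠ 0 := by simpa using hα
  have hnoroot : ∀ x : AlgebraicClosure F, Nb.eval x ≠ 0 := by
    intro x₀ hx₀
    set g : AlgebraicClosure F → AlgebraicClosure F := fun w => ι r / (σ w - 1) with hg
    set S : Set (AlgebraicClosure F) := {x | Nb.eval x = 0} with hS
    have hSfin : S.Finite := Polynomial.finite_setOf_isRoot hNb0
    have hSiff : ∀ x, x ∈ S ↔ Mb.eval x = 0 := by
      intro x
      show Nb.eval x = 0 ↔ _
      rw [hNb]
      simp [hια]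
    have hSchar : ∀ x, x ∈ S ↔ ∃ w, w ∈ S ∧ w ≠ 1 ∧ x = g w := by
      intro x
      rw [hSiff, hchar]
      constructor
      · rintro ⟨w, hw, h1, hx⟩; exact ⟨w, hw, h1, hx⟩
      · rintro ⟨w, hw, h1, hx⟩; exact ⟨w, hw, h1, hx⟩
    have hginj : ∀ w w', w ≠ 1 → w' ≠ 1 → g w = g w' → w = w' := by
      intro w w' h1 h1' hgw
      have hs : σ w - 1 ≠ 0 := fun h => h1 (hσinj (by rw [map_one]; exact sub_eq_zero.mp h))
      have hs' : σ w' - 1 ≠ 0 := fun h => h1' (hσinj (by rw [map_one]; exact sub_eq_zero.mp h))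
      have hιr : ι r ≠ 0 := by simpa using hr
      have hgw' : ι r / (σ w - 1) = ι r / (σ w' - 1) := hgw
      have h2 := (div_eq_div_iff hs hs').mp hgw'
      have h3 : ι r * (σ w' - 1) = ι r * (σ w - 1) := by linear_combination h2
      have h4 := mul_left_cancel₀ hιr h3
      exact (hσinj (sub_left_inj.mp h4)).symm
    have h1S : (1 : AlgebraicClosure F) ∉ S := by
      intro h1
      have hinjOn : Set.InjOn g (S \ {1}) := by
        intro w hw w' hw' hgw
        exact hginj w w' hw.2 hw'.2 hgw
      have himg : S = g '' (S \ {1}) := by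
        ext x
        rw [hSchar x]
        simp only [Set.mem_image, Set.mem_diff, Set.mem_singleton_iff]
        constructor
        · rintro ⟨w, hw, hne, hx⟩; exact ⟨w, ⟨hw, hne⟩, hx.symm⟩
        · rintro ⟨w, ⟨hw, hne⟩, hx⟩; exact ⟨w, hw, hne, hx.symm⟩
      have hcard : S.ncard = (S \ {1}).ncard := by
        conv_lhs => rw [himg]
        exact Set.ncard_image_of_injOn hinjOn
      rw [Set.ncard_diff_singleton_of_mem h1] at hcard
      have hpos : 0 < S.ncard := (Set.ncard_pos hSfin).mpr ⟨1, h1⟩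
      omega
    have hgS : ∀ w, w ∈ S → g w ∈ S := by
      intro w hw
      exact (hSchar (g w)).mpr ⟨w, hw, fun h => h1S (by rw [← h]; exact hw), rfl⟩
    have horb : ∀ k, g^[k] x₀ ∈ S := by
      intro k
      induction k with
      | zero => exact hx₀
      | succ k ih => rw [Function.iterate_succ_apply']; exact hgS _ ih
    obtain ⟨a, -, b, -, hab, habe⟩ :=
      Set.infinite_univ.exists_ne_map_eq_of_mapsTo (f := fun k : ℕ => g^[k] x₀)
        (fun k _ => horb k) hSfin
    have hcancel : ∀ n z z', z ∈ S → z' ∈ S → g^[n] z = g^[n] z' → z = z' := by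
      intro n
      induction n with
      | zero => intro z z' _ _ h; exact h
      | succ n ih =>
          intro z z' hz hz' h
          rw [Function.iterate_succ_apply, Function.iterate_succ_apply] at h
          have h2 := ih (g z) (g z') (hgS _ hz) (hgS _ hz') h
          exact hginj z z' (fun h1 => h1S (by rw [← h1]; exact hz))
            (fun h1 => h1S (by rw [← h1]; exact hz')) h2
    have hper : ∃ i, 1 ≤ i ∧ g^[i] x₀ = x₀ := by
      rcases Nat.lt_or_ge a b with hlt | hge
      · obtain ⟨d, rfl⟩ : ∃ d, b = a + d := ⟨b - a, by omega⟩
        refine ⟨d, by omega, ?_⟩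
        have h5 : g^[a] (g^[d] x₀) = g^[a] x₀ := by
          rw [← Function.iterate_add_apply]
          exact habe.symm
        exact hcancel a _ _ (horb d) hx₀ h5
      · obtain ⟨d, rfl⟩ : ∃ d, a = b + d := ⟨a - b, by omega⟩
        refine ⟨d, by omega, ?_⟩
        have h5 : g^[b] (g^[d] x₀) = g^[b] x₀ := by
          rw [← Function.iterate_add_apply]
          exact habe
        exact hcancel b _ _ (horb d) hx₀ h5
    obtain ⟨i, hi1, hie⟩ := hper
    have hrel : ∀ w, w ∈ S →
        MoebiusEq (σ w) ((!![1, r; 1, 0] : Matrix (Fin 2) (Fin 2) F).map ι) (g w) := by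
      intro w hw
      have hs : σ w - 1 ≠ 0 := by
        intro h
        have hw1 : w = 1 := hσinj (by rw [map_one]; exact sub_eq_zero.mp h)
        rw [hw1] at hw
        exact h1S hw
      unfold MoebiusEq
      simp only [Matrix.map_apply, Matrix.of_apply, Matrix.cons_val', Matrix.cons_val_zero, Matrix.cons_val_one,
        Matrix.head_cons, Matrix.head_fin_const, Matrix.empty_val', Matrix.cons_val_fin_one,
        map_one, map_zero, hg]
      field_simp
      ring
    have hco : ∀ k, MoebiusEq ((⇑σ)^[k] x₀)
        ((cocycle τ₀ !![1, r; 1, 0] k).map ι) (g^[k] x₀) := by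
      intro k
      induction k with
      | zero =>
          show MoebiusEq x₀ ((1 : Matrix (Fin 2) (Fin 2) F).map ι) x₀
          rw [Matrix.map_one ι (map_zero ι) (map_one ι)]
          unfold MoebiusEq
          simp [Matrix.one_apply]
      | succ k ih =>
          rw [cocycle_succ', Matrix.map_mul]
          rw [Function.iterate_succ_apply' (⇑σ), Function.iterate_succ_apply' g]
          have h1 : ((cocycle τ₀ !![1, r; 1, 0] k).map ⇑τ₀).map ⇑ι
              = ((cocycle τ₀ !![1, r; 1, 0] k).map ⇑ι).map ⇑σ := by
            have hfe : (⇑ι ∘ ⇑τ₀) = (⇑σ ∘ ⇑ι) := funext fun z => (hσ z).symm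
            rw [Matrix.map_map, Matrix.map_map, hfe]
          rw [h1]
          exact (ih.map σ).comp (hrel _ (horb k))
    have hfinal := hco i
    rw [hie] at hfinal
    exact hnoalg (AlgebraicClosure F) σ hσ x₀ (Algebra.IsAlgebraic.isAlgebraic x₀) i hi1 hfinal
  have hdeg : N.natDegree = 0 := by
    by_contra hd
    have hnd : Nb.natDegree ≠ 0 := by
      rw [hNbdef, Polynomial.natDegree_map]
      exact hd
    have hdb : Nb.degree ≠ 0 := by
      simpa using Polynomial.degree_ne_of_natDegree_ne hnd
    obtain ⟨x, hx⟩ := IsAlgClosed.exists_root Nb hdb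
    exact hnoroot x hx
  refine ⟨N.coeff 0, ?_, Polynomial.eq_C_of_natDegree_eq_zero hdeg⟩
  intro h
  apply hN
  rw [Polynomial.eq_C_of_natDegree_eq_zero hdeg, h, map_zero]
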